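/- Let A ⊆ B be (possibly noncommutative, associative) algebras over a field k, and let ε : B → A be an algebra homomorphism with ε(a) = a for all a ∈ A. Let I = ker ε and let J ⊆ A be a two-sided ideal of A. Write ⟨J⟩ for the two-sided ideal of B generated by J. Then for every n ≥ 1, ⟨J⟩^(n²+n−1) ⊆ ⟨Jⁿ⟩ + Iⁿ, where ⟨Jⁿ⟩ is the two-sided ideal of B generated by Jⁿ. -/

import Mathlib

/-- Product of a list of elements in a (possibly non-unital) algebra;
the empty product is set to `0` (it is never used below). -/
def mprod {R : Type*} [Mul R] [Zero R] : List R → R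
  | [] => 0
  | [a] => a
  | a :: l => a * mprod l

/-- The set of `n`-fold products of elements of `s`. -/
def prodSet {R : Type*} [Mul R] [Zero R] (s : Set R) (n : ℕ) : Set R :=
  { x | ∃ l : List R, l.length = n ∧ (∀ y ∈ l, y ∈ s) ∧ x = mprod l }

lemma mprod_cons {R : Type*} [Mul R] [Zero R] {a : R} {l : List R} (hl : l ≠ []) :
    mprod (a :: l) = a * mprod l := by
  cases l with
  | nil => simp at hl
  | cons b t => rfl

lemma mprod_append {R : Type*} [Semigroup R] [Zero R] {l₁ l₂ : List R}
    (h₁ : l₁ ≠ []) (h₂ : l₂ ≠ []) : mprod (l₁ ++ l₂) = mprod l₁ * mprod l₂ := by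
  induction l₁ with
  | nil => simp at h₁
  | cons a t ih =>
    cases t with
    | nil => simp [mprod_cons h₂, mprod]
    | cons b u =>
      rw [List.cons_append, mprod_cons (by simp), mprod_cons (by simp), ih (by simp), mul_assoc]

/-- Pigeonhole: if a list has no contiguous block of `n` elements failing `q`
(and no initial block of `j` failing `q`), its length is at most
`(j-1) + (count of q) * n`. -/
lemma runbound {R : Type*} (q : R → Bool) (n : ℕ) (hn : 1 ≤ n) :
    ∀ (l : List R) (j : ℕ), 1 ≤ j →
      (∀ t₁ m t₂, l = t₁ ++ m ++ t₂ → m.length = n → ∃ x ∈ m, q x) →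
      (∀ m t₂, l = m ++ t₂ → m.length = j → ∃ x ∈ m, q x) →
      l.length ≤ (j - 1) + l.countP q * n := by
  intro l
  induction l with
  | nil => intro j hj _ _; simp
  | cons x t ih =>
    intro j hj hrun hinit
    by_cases hx : q x
    · have hrun' : ∀ t₁ m t₂, t = t₁ ++ m ++ t₂ → m.length = n → ∃ y ∈ m, q y := by
        intro t₁ m t₂ h hm; exact hrun (x :: t₁) m t₂ (by simp [h]) hm
      have hinit' : ∀ m t₂, t = m ++ t₂ → m.length = n → ∃ y ∈ m, q y := by
        intro m t₂ h hm; exact hrun' [] m t₂ (by simpa using h) hm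
      have hb := ih n hn hrun' hinit'
      have hc : (x :: t).countP q = t.countP q + 1 := by
        simp [List.countP_cons, hx]
      have hexp : (t.countP q + 1) * n = t.countP q * n + n := by ring
      simp only [List.length_cons, hc]
      omega
    · match j, hj with
      | 1, _ =>
        exfalso
        obtain ⟨y, hy, hqy⟩ := hinit [x] t rfl rfl
        simp only [List.mem_singleton] at hy
        subst hy; exact hx hqy
      | (j+2), _ =>
        have hrun' : ∀ t₁ m t₂, t = t₁ ++ m ++ t₂ → m.length = n → ∃ y ∈ m, q y := by
          intro t₁ m t₂ h hm; exact hrun (x :: t₁) m t₂ (by simp [h]) hm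
        have hinit' : ∀ m t₂, t = m ++ t₂ → m.length = j + 1 → ∃ y ∈ m, q y := by
          intro m t₂ h hm
          obtain ⟨y, hy, hqy⟩ := hinit (x :: m) t₂ (by simp [h]) (by simp [hm])
          rcases List.mem_cons.mp hy with rfl | hy
          · exact absurd hqy hx
          · exact ⟨y, hy, hqy⟩
        have hb := ih (j + 1) (by omega) hrun' hinit'
        have hc : (x :: t).countP q = t.countP q := by simp [List.countP_cons, hx]
        simp only [List.length_cons, hc]
        omega

/-- If a list has at least `c ≥ 1` entries in an absorbing set `Iset`, then its
`mprod` is a `c`-fold product of elements of `Iset`. -/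
lemma absorb_prod {R : Type*} [Semigroup R] [Zero R] {Iset : Set R} (q : R → Bool)
    (hq : ∀ x, q x = true → x ∈ Iset)
    (hml : ∀ x y, y ∈ Iset → x * y ∈ Iset) (hmr : ∀ y x, y ∈ Iset → y * x ∈ Iset) :
    ∀ (l : List R) (c : ℕ), 1 ≤ c → c ≤ l.countP q → mprod l ∈ prodSet Iset c := by
  intro l
  induction l with
  | nil => intro c hc hcount; simp at hcount; omega
  | cons x t ih =>
    intro c hc hcount
    by_cases hx : q x
    · have hxI := hq x hx
      match c with
      | 1 =>
        cases t with
        | nil => exact ⟨[x], rfl, by simpa, rfl⟩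
        | cons b u =>
          refine ⟨[x * mprod (b :: u)], rfl, by simpa using hmr x (mprod (b :: u)) hxI, ?_⟩
          rw [mprod_cons (by simp)]; rfl
      | (c+2) =>
        have hcount' : c + 1 ≤ t.countP q := by
          simp only [List.countP_cons, hx, if_true] at hcount; omega
        obtain ⟨l'', hlen, hmem, heq⟩ := ih (c + 1) (by omega) hcount'
        have ht : t ≠ [] := by rintro rfl; simp at hcount'
        have hl'' : l'' ≠ [] := by rintro rfl; simp at hlen
        refine ⟨x :: l'', by simp [hlen], ?_, ?_⟩
        · intro y hy
          rcases List.mem_cons.mp hy with rfl | hy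
          · exact hxI
          · exact hmem y hy
        · rw [mprod_cons ht, heq, mprod_cons hl'']
    · have hcount' : c ≤ t.countP q := by
        simp only [List.countP_cons, hx, if_false] at hcount; simpa using hcount
      obtain ⟨l'', hlen, hmem, heq⟩ := ih c hc hcount'
      have ht : t ≠ [] := by rintro rfl; simp at hcount'; omega
      cases l'' with
      | nil => simp at hlen; omega
      | cons y u =>
        have hyI : y ∈ Iset := hmem y (by simp)
        cases u with
        | nil =>
          have : mprod t = y := by rw [heq]; rfl
          refine ⟨[x * y], by simpa using hlen, by simpa using hml x y hyI, ?_⟩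
          rw [mprod_cons ht, this]; rfl
        | cons z w =>
          refine ⟨(x * y) :: z :: w, by simpa using hlen, ?_, ?_⟩
          · intro a ha
            rcases List.mem_cons.mp ha with rfl | ha
            · exact hml x y hyI
            · exact hmem a (by simp [List.mem_cons.mp ha])
          · rw [mprod_cons ht, heq, mprod_cons (l := z :: w) (by simp),
              mprod_cons (l := z :: w) (by simp), ← mul_assoc]

/-- A product containing a contiguous block of `n` elements of `Jset` lies in the
two-sided ideal generated by `n`-fold products of `Jset`. -/
lemma run_mem_span {R : Type*} [NonUnitalRing R] {Jset : Set R} {n : ℕ} (hn : 1 ≤ n)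
    {t₁ m t₂ : List R} (hm : m.length = n) (hmem : ∀ x ∈ m, x ∈ Jset) :
    mprod (t₁ ++ m ++ t₂) ∈ TwoSidedIdeal.span (prodSet Jset n) := by
  have hm0 : m ≠ [] := by rintro rfl; simp at hm; omega
  have base : mprod m ∈ TwoSidedIdeal.span (prodSet Jset n) :=
    TwoSidedIdeal.subset_span ⟨m, hm, hmem, rfl⟩
  rcases eq_or_ne t₁ [] with rfl | h1 <;> rcases eq_or_ne t₂ [] with rfl | h2
  · simpa using base
  · rw [List.nil_append, mprod_append hm0 h2]
    exact TwoSidedIdeal.mul_mem_right _ _ _ base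
  · rw [List.append_nil, mprod_append h1 hm0]
    exact TwoSidedIdeal.mul_mem_left _ _ _ base
  · rw [mprod_append (by simp [h1]) h2, mprod_append h1 hm0]
    exact TwoSidedIdeal.mul_mem_right _ _ _ (TwoSidedIdeal.mul_mem_left _ _ _ base)

/-- Multilinear expansion: if every element of `T` is a sum of an element of `S₁`
and an element of `S₂`, then a product of elements of `T` is a sum of products of
elements of `S₁ ∪ S₂`. -/
lemma mprod_mem_closure {R : Type*} [NonUnitalRing R] {S₁ S₂ T : Set R}
    (h : ∀ x ∈ T, ∃ u ∈ S₁, ∃ v ∈ S₂, x = u + v) :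
    ∀ l : List R, l ≠ [] → (∀ y ∈ l, y ∈ T) →
      mprod l ∈ AddSubmonoid.closure (prodSet (S₁ ∪ S₂) l.length) := by
  have key : ∀ (m : ℕ) (w : R), w ∈ S₁ ∪ S₂ →
      ∀ z ∈ AddSubmonoid.closure (prodSet (S₁ ∪ S₂) (m + 1)),
      w * z ∈ AddSubmonoid.closure (prodSet (S₁ ∪ S₂) (m + 2)) := by
    intro m w hw z hz
    induction hz using AddSubmonoid.closure_induction with
    | mem p hp =>
      obtain ⟨l', hlen, hmem, rfl⟩ := hp
      have hl' : l' ≠ [] := by rintro rfl; simp at hlen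
      refine AddSubmonoid.subset_closure ⟨w :: l', by simp [hlen], ?_, (mprod_cons hl').symm⟩
      intro y hy
      rcases List.mem_cons.mp hy with rfl | hy
      · exact hw
      · exact hmem y hy
    | zero => simpa using zero_mem _
    | add a b _ _ ha hb => rw [mul_add]; exact add_mem ha hb
  intro l
  induction l with
  | nil => intro h0; exact absurd rfl h0
  | cons x t ih =>
    intro _ hmem
    obtain ⟨u, hu, v, hv, hx⟩ := h x (hmem x (by simp))
    cases t with
    | nil =>
      have h1 : mprod [x] = x := rfl
      rw [h1, hx]
      exact add_mem (AddSubmonoid.subset_closure ⟨[u], rfl, by simpa using Or.inl hu, rfl⟩)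
        (AddSubmonoid.subset_closure ⟨[v], rfl, by simpa using Or.inr hv, rfl⟩)
    | cons b s =>
      have ht : (b :: s) ≠ [] := by simp
      have hm := ih ht (fun y hy => hmem y (by simp [hy]))
      have hlen : (b :: s).length = s.length + 1 := by simp
      rw [hlen] at hm
      have h1 := key s.length u (Or.inl hu) _ hm
      have h2 := key s.length v (Or.inr hv) _ hm
      have hL : (x :: b :: s).length = s.length + 2 := by simp
      rw [hL, mprod_cons ht, hx, add_mul]
      exact add_mem h1 h2

theorem stmt0 {k : Type*} [Field k] {B : Type*} [NonUnitalRing B] [Module k B]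
    [SMulCommClass k B B] [IsScalarTower k B B]
    (A : NonUnitalSubalgebra k B) (ε : B →ₙₐ[k] A)
    (hε : ∀ a : A, ε (a : B) = a)
    (J : TwoSidedIdeal A) (n : ℕ) (hn : 1 ≤ n) :
    TwoSidedIdeal.span
        (prodSet ((TwoSidedIdeal.span ((↑) '' (J : Set A)) : TwoSidedIdeal B) : Set B)
          (n ^ 2 + n - 1))
      ≤ TwoSidedIdeal.span (prodSet ((↑) '' (J : Set A)) n)
          ⊔ TwoSidedIdeal.span (prodSet {b : B | ε b = 0} n) := by
  classical
  set Jset : Set B := (↑) '' (J : Set A) with hJset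
  set Iset : Set B := {b : B | ε b = 0} with hIset
  set N : ℕ := n ^ 2 + n - 1 with hN
  set T : TwoSidedIdeal B := TwoSidedIdeal.span (prodSet Jset n)
      ⊔ TwoSidedIdeal.span (prodSet Iset n) with hT
  have hNsq : n * n ≤ N := by
    have : n ^ 2 = n * n := pow_two n
    omega
  have hN1 : 1 ≤ N := by nlinarith
  -- Iset is absorbing
  have hIl : ∀ x y : B, y ∈ Iset → x * y ∈ Iset := by
    intro x y hy
    simp only [hIset, Set.mem_setOf_eq] at hy ⊢
    rw [map_mul, hy, mul_zero]
  have hIr : ∀ y x : B, y ∈ Iset → y * x ∈ Iset := by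
    intro y x hy
    simp only [hIset, Set.mem_setOf_eq] at hy ⊢
    rw [map_mul, hy, zero_mul]
  -- ε maps the span of Jset into J
  have hεJ : ∀ x ∈ (TwoSidedIdeal.span Jset : TwoSidedIdeal B), ε x ∈ J := by
    intro x hx
    rw [TwoSidedIdeal.mem_span_iff] at hx
    have := hx (TwoSidedIdeal.comap ε J) ?_
    · rwa [TwoSidedIdeal.mem_comap] at this
    · rintro _ ⟨a, ha, rfl⟩
      rw [SetLike.mem_coe, TwoSidedIdeal.mem_comap, hε a]
      exact ha
  -- decomposition of elements of the span
  have hdec : ∀ x ∈ ((TwoSidedIdeal.span Jset : TwoSidedIdeal B) : Set B),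
      ∃ u ∈ Jset, ∃ v ∈ Iset, x = u + v := by
    intro x hx
    refine ⟨(ε x : B), ⟨ε x, hεJ x hx, rfl⟩, x - (ε x : B), ?_, by abel⟩
    simp only [hIset, Set.mem_setOf_eq, map_sub, hε (ε x), sub_self]
  -- every generator of the LHS lies in T
  have hgen : prodSet ((TwoSidedIdeal.span Jset : TwoSidedIdeal B) : Set B) N ⊆ T := by
    rintro _ ⟨l, hlen, hmem, rfl⟩
    have hl0 : l ≠ [] := by rintro rfl; simp at hlen; omega
    have hcl := mprod_mem_closure hdec l hl0 hmem
    rw [hlen] at hcl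
    -- it suffices to show every generator of the closure lies in T
    have hsub : ∀ z ∈ prodSet (Jset ∪ Iset) N, z ∈ T := by
      rintro _ ⟨l', hlen', hmem', rfl⟩
      set q : B → Bool := fun x => decide (x ∈ Iset) with hq
      by_cases hcount : n ≤ l'.countP q
      · have := absorb_prod q (fun x hx => by simpa [hq] using hx) hIl hIr l' n hn hcount
        exact le_sup_right (α := TwoSidedIdeal B) (TwoSidedIdeal.subset_span this)
      · by_cases hrun : ∃ t₁ m t₂, l' = t₁ ++ m ++ t₂ ∧ m.length = n ∧ ∀ x ∈ m, ¬ (q x = true)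
        · obtain ⟨t₁, m, t₂, rfl, hmlen, hmq⟩ := hrun
          have hmJ : ∀ x ∈ m, x ∈ Jset := by
            intro x hxm
            have hx' := hmem' x (by simp [hxm])
            rcases hx' with h | h
            · exact h
            · exact absurd (by simpa [hq] using h) (hmq x hxm)
          exact le_sup_left (α := TwoSidedIdeal B) (run_mem_span hn hmlen hmJ)
        · exfalso
          push_neg at hrun
          have hrun' : ∀ t₁ m t₂, l' = t₁ ++ m ++ t₂ → m.length = n → ∃ x ∈ m, q x := by
            intro t₁ m t₂ h hmlen
            exact hrun t₁ m t₂ h hmlen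
          have hinit : ∀ m t₂, l' = m ++ t₂ → m.length = n → ∃ x ∈ m, q x := by
            intro m t₂ h hmlen
            exact hrun' [] m t₂ (by simpa using h) hmlen
          have hb := runbound q n hn l' n hn hrun' hinit
          rw [hlen'] at hb
          have hle : l'.countP q ≤ n - 1 := by omega
          have : l'.countP q * n ≤ (n - 1) * n := Nat.mul_le_mul_right n hle
          have hexp : (n - 1) * n + n = n * n := by
            cases n with
            | zero => omega
            | succ m => simp only [Nat.succ_sub_one]; ring
          have hsq : n ^ 2 = n * n := pow_two n
          omega
    -- transfer along the additive closure
    refine AddSubmonoid.closure_induction (fun z hz => hsub z hz) (zero_mem T)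
      (fun a b _ _ ha hb => T.add_mem ha hb) hcl
  intro x hx
  rw [TwoSidedIdeal.mem_span_iff] at hx
  exact hx T hgen
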